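/- arXiv:2307.10524 — 2 statements merged into one kernel-verified Lean document; each statement's English description precedes it below -/
import Mathlib

section
/- Let Q⋆, Q̃ : U → ℝ with Q̃ Lipschitz of constant L_Q on a convex compact set U. Let ũ minimize Q̃, let u⋆ minimize Q⋆, let ū ∈ U, R ≥ 0, and let u be the projection of ũ onto the ball of radius R around ū (along the segment). Define ζ^Q = Q̃(u) − Q⋆(u) and ζ^V = Q̃(ũ) − Q⋆(u⋆), and μ = ζ^V − ζ^Q. Then Q⋆(u) − inf_{v∈U} Q⋆(v) ≤ L_Q · max{0, ‖ũ − ū‖ − R} + μ. -/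
open scoped Classical

/-- Per-step projection (consistency) lemma: with `ζ^Q = Q̃ u − Q⋆ u`,
`ζ^V = Q̃ ut − Q⋆ u⋆` and `μ = ζ^V − ζ^Q`, the optimal-Q suboptimality of
the projected action satisfies
`Q⋆ u − inf_{v∈U} Q⋆ v ≤ L_Q · max 0 (‖ut − ub‖ − R) + μ`. -/
theorem projection_lemma_per_step
    {E : Type*} [NormedAddCommGroup E] [NormedSpace ℝ E]
    (U : Set E) (hUconv : Convex ℝ U) (hUcomp : IsCompact U)
    (Qstar Qtilde : E → ℝ) (L_Q : ℝ) (hL : 0 ≤ L_Q)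
    (hLip : ∀ a ∈ U, ∀ b ∈ U, |Qtilde a - Qtilde b| ≤ L_Q * ‖a - b‖)
    (ub ut ustar : E) (hub : ub ∈ U) (hut : ut ∈ U) (hustar : ustar ∈ U)
    (hmin : ∀ v ∈ U, Qtilde ut ≤ Qtilde v)
    (hminstar : ∀ v ∈ U, Qstar ustar ≤ Qstar v)
    (R : ℝ) (hR : 0 ≤ R)
    (lam : ℝ) (hlam : lam = if ut = ub then 1 else min 1 (R / ‖ut - ub‖))
    (u : E) (hu : u = lam • ut + (1 - lam) • ub)
    (ζQ ζV μ : ℝ)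
    (hζQ : ζQ = Qtilde u - Qstar u)
    (hζV : ζV = Qtilde ut - Qstar ustar)
    (hμ : μ = ζV - ζQ) :
    Qstar u - sInf (Qstar '' U) ≤ L_Q * max 0 (‖ut - ub‖ - R) + μ := by

  -- lam ∈ [0,1]
  have hd : (0:ℝ) ≤ ‖ut - ub‖ := norm_nonneg _
  have hlam0 : 0 ≤ lam := by
    rw [hlam]; split
    · norm_num
    · exact le_min zero_le_one (div_nonneg hR hd)
  have hlam1 : lam ≤ 1 := by
    rw [hlam]; split
    · exact le_refl 1
    · exact min_le_left _ _
  have huU : u ∈ U := by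
    rw [hu]
    exact hUconv hut hub hlam0 (by linarith) (by ring)
  -- norm equality
  have hnorm : ‖u - ut‖ = (1 - lam) * ‖ut - ub‖ := by
    have : u - ut = (1 - lam) • (ub - ut) := by
      rw [hu]; module
    rw [this, norm_smul, Real.norm_eq_abs, abs_of_nonneg (by linarith), norm_sub_rev]
  -- bound on (1-lam)*‖ut-ub‖
  have hbound : (1 - lam) * ‖ut - ub‖ ≤ max 0 (‖ut - ub‖ - R) := by
    rcases eq_or_ne ut ub with h | h
    · rw [hlam, if_pos h]
      simp
    · have hdpos : (0:ℝ) < ‖ut - ub‖ := by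
        rwa [norm_pos_iff, sub_ne_zero]
      rw [hlam, if_neg h]
      rcases le_or_gt ‖ut - ub‖ R with hle | hlt
      · have : (1:ℝ) ≤ R / ‖ut - ub‖ := (one_le_div hdpos).2 hle
        rw [min_eq_left this]
        simp [le_max_iff]
      · have : R / ‖ut - ub‖ ≤ 1 := (div_le_one hdpos).2 hlt.le
        rw [min_eq_right this]
        have : (1 - R / ‖ut - ub‖) * ‖ut - ub‖ = ‖ut - ub‖ - R := by
          field_simp
        rw [this]
        exact le_max_right _ _
  have hlip : Qtilde u - Qtilde ut ≤ L_Q * max 0 (‖ut - ub‖ - R) := by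
    have h1 : Qtilde u - Qtilde ut ≤ L_Q * ‖u - ut‖ :=
      le_trans (le_abs_self _) (hLip u huU ut hut)
    calc Qtilde u - Qtilde ut ≤ L_Q * ((1 - lam) * ‖ut - ub‖) := by rwa [hnorm] at h1
      _ ≤ L_Q * max 0 (‖ut - ub‖ - R) := mul_le_mul_of_nonneg_left hbound hL
  have hinf : sInf (Qstar '' U) = Qstar ustar := by
    apply le_antisymm
    · exact csInf_le ⟨Qstar ustar, by rintro _ ⟨v, hv, rfl⟩; exact hminstar v hv⟩
        ⟨ustar, hustar, rfl⟩
    · refine le_csInf ⟨Qstar ustar, ustar, hustar, rfl⟩ ?_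
      rintro _ ⟨v, hv, rfl⟩; exact hminstar v hv
  rw [hinf]
  have : Qstar u - Qstar ustar = (Qtilde u - Qtilde ut) + μ := by
    rw [hμ, hζV, hζQ]; ring
  linarith
end

section
/- If a policy π̄ satisfies W_p(ρ_{t₁:t₂}(ρ), ρ_{t₁:t₂}(ρ')) ≤ s(t₂−t₁)·W_p(ρ, ρ') for all initial distributions ρ, ρ' within Wasserstein distance r, with ∑_{t=0}^{T−1} s(t) ≤ C_s, and if for each t the switching discrepancy satisfies W_p(ρ̄_{t−τ|t−τ}, ρ̄_{t−τ|t−τ−1}) ≤ a_{t−τ} ≤ r, then W_p(ρ_t, ρ̄_t) ≤ ∑_{τ=0}^{t−1} s(τ)·a_{t−τ} for every t, and consequently ∑_{t=0}^{T−1} W_p(ρ_t, ρ̄_t) ≤ C_s · ∑_{t=0}^{T−1} a_t. -/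
open Finset

/-- Metric abstraction of the perturbation lemma. `Φ t₁ t₂` propagates
distributions from step `t₁` to step `t₂` under the robust baseline and is
locally `s(t₂−t₁)`-Lipschitz within radius `r`; `B t j` is the distribution at
time `t` obtained by switching from the augmented policy to the baseline at
time `j` (`B t t = ρ t`, `B t 0 = ρ̄ t`), and the per-switch discrepancies are
bounded by `a k ≤ r`. Then `d(ρ t, ρ̄ t) ≤ ∑_{τ<t} s τ · a (t−τ)` and
`∑_{t<T} d(ρ t, ρ̄ t) ≤ C_s · ∑_{t<T} a t`. -/
theorem perturbation_lemma_metric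
    {M : Type*} [MetricSpace M]
    (T : ℕ) (r C_s : ℝ) (s a : ℕ → ℝ)
    (hs : ∀ t, 0 ≤ s t) (hC : ∀ t ≤ T, ∑ τ ∈ range t, s τ ≤ C_s)
    (ha : ∀ k, 0 ≤ a k) (har : ∀ k, a k ≤ r)
    (Φ : ℕ → ℕ → M → M)
    (hΦ : ∀ t₁ t₂ : ℕ, ∀ m m' : M, dist m m' ≤ r →
      dist (Φ t₁ t₂ m) (Φ t₁ t₂ m') ≤ s (t₂ - t₁) * dist m m')
    (ρ ρbar : ℕ → M) (B : ℕ → ℕ → M)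
    (hBtop : ∀ t, B t t = ρ t)
    (hBbot : ∀ t, B t 0 = ρbar t)
    (hstep : ∀ t j, j < t →
      B t (j + 1) = Φ (j + 1) t (B (j + 1) (j + 1)) ∧
      B t j = Φ (j + 1) t (B (j + 1) j))
    (hswitch : ∀ k : ℕ, 1 ≤ k → dist (B k k) (B k (k - 1)) ≤ a k) :
    (∀ t, dist (ρ t) (ρbar t) ≤ ∑ τ ∈ range t, s τ * a (t - τ)) ∧
      ∑ t ∈ range T, dist (ρ t) (ρbar t) ≤ C_s * ∑ t ∈ range T, a t := by
  -- per-step bound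
  have key : ∀ t j, j < t → dist (B t j) (B t (j + 1)) ≤ s (t - (j + 1)) * a (j + 1) := by
    intro t j hj
    obtain ⟨h1, h2⟩ := hstep t j hj
    rw [h1, h2]
    have hsw : dist (B (j + 1) (j + 1)) (B (j + 1) j) ≤ a (j + 1) := by
      have := hswitch (j + 1) (by omega)
      simpa using this
    have hd : dist (B (j + 1) j) (B (j + 1) (j + 1)) ≤ r := by
      rw [dist_comm]; exact hsw.trans (har _)
    calc dist (Φ (j+1) t (B (j+1) j)) (Φ (j+1) t (B (j+1) (j+1)))
        ≤ s (t - (j + 1)) * dist (B (j+1) j) (B (j+1) (j+1)) := hΦ _ _ _ _ hd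
      _ ≤ s (t - (j + 1)) * a (j + 1) := by
          apply mul_le_mul_of_nonneg_left _ (hs _)
          rw [dist_comm]; exact hsw
  have main : ∀ t, dist (ρ t) (ρbar t) ≤ ∑ τ ∈ range t, s τ * a (t - τ) := by
    intro t
    rw [← hBtop, ← hBbot]
    calc dist (B t t) (B t 0) = dist (B t 0) (B t t) := dist_comm _ _
      _ ≤ ∑ j ∈ range t, dist (B t j) (B t (j + 1)) := dist_le_range_sum_dist (B t) t
      _ ≤ ∑ j ∈ range t, s (t - (j + 1)) * a (j + 1) := by
          apply Finset.sum_le_sum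
          intro j hj
          exact key t j (mem_range.mp hj)
      _ = ∑ τ ∈ range t, s τ * a (t - τ) := by
          rw [← Finset.sum_range_reflect (fun τ => s τ * a (t - τ)) t]
          apply Finset.sum_congr rfl
          intro j hj
          have hj' : j < t := mem_range.mp hj
          have e1 : t - (j + 1) = t - 1 - j := by omega
          have e2 : t - (t - 1 - j) = j + 1 := by omega
          rw [e1, e2]
  refine ⟨main, ?_⟩
  have hanonneg : (0:ℝ) ≤ ∑ k ∈ range T, a k := Finset.sum_nonneg fun k _ => ha k
  calc ∑ t ∈ range T, dist (ρ t) (ρbar t)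
      ≤ ∑ t ∈ range T, ∑ τ ∈ range t, s τ * a (t - τ) :=
        Finset.sum_le_sum fun t _ => main t
    _ = ∑ τ ∈ range T, ∑ t ∈ range T, (if τ < t then s τ * a (t - τ) else 0) := by
        rw [Finset.sum_comm]
        refine Finset.sum_congr rfl fun t ht => ?_
        rw [← Finset.sum_filter]
        apply Finset.sum_congr _ fun _ _ => rfl
        ext x
        simp only [Finset.mem_filter, Finset.mem_range]
        have := mem_range.mp ht
        omega
    _ ≤ ∑ τ ∈ range T, s τ * ∑ k ∈ range T, a k := by
        apply Finset.sum_le_sum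
        intro τ hτ
        have hτT := mem_range.mp hτ
        have e1 : ∑ t ∈ range T, (if τ < t then s τ * a (t - τ) else 0)
            = ∑ t ∈ Ico (τ + 1) T, s τ * a (t - τ) := by
          rw [← Finset.sum_filter]
          apply Finset.sum_congr _ fun _ _ => rfl
          ext x
          simp only [Finset.mem_filter, Finset.mem_range, Finset.mem_Ico]
          omega
        rw [e1, ← Finset.mul_sum]
        apply mul_le_mul_of_nonneg_left _ (hs τ)
        have e2 : ∑ t ∈ Ico (τ + 1) T, a (t - τ) = ∑ k ∈ Ico 1 (T - τ), a k := by
          rw [Finset.sum_Ico_eq_sum_range, Finset.sum_Ico_eq_sum_range]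
          apply Finset.sum_congr (by rw [Nat.sub_sub])
          intro i hi
          congr 1
          omega
        rw [e2]
        apply Finset.sum_le_sum_of_subset_of_nonneg
        · intro x hx
          simp only [Finset.mem_Ico] at hx
          exact mem_range.mpr (by omega)
        · intro k _ _; exact ha k
    _ = (∑ τ ∈ range T, s τ) * ∑ k ∈ range T, a k := by rw [← Finset.sum_mul]
    _ ≤ C_s * ∑ t ∈ range T, a t :=
        mul_le_mul_of_nonneg_right (hC T le_rfl) hanonneg
end
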